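/- Let L > 0 and set λ = (2π/L)⁴. The operator h ↦ (d²/dx²)[sinh(h'')] is strongly monotone on mean-zero profiles: for any two four times continuously differentiable L-periodic mean-zero functions u, v : ℝ → ℝ, ∫₀ᴸ ( (d²/dx²)[sinh(u''(x))] − (d²/dx²)[sinh(v''(x))] ) (u(x) − v(x)) dx ≥ λ ∫₀ᴸ (u(x) − v(x))² dx. -/

import Mathlib

open MeasureTheory Real Complex intervalIntegral Set

section helpers
variable (L : ℝ) [hL : Fact (0 < L)]

lemma lift_eq_liftIoc (f : ℝ → ℂ) (hp : Function.Periodic f L) :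
    hp.lift = AddCircle.liftIoc L 0 f := by
  funext z
  obtain ⟨x, hx, rfl⟩ : ∃ x ∈ Ioc (0:ℝ) (0 + L), (x : AddCircle L) = z := by
    have h := AddCircle.coe_image_Ioc_eq L 0
    have : z ∈ (((↑) : ℝ → AddCircle L) '' Ioc 0 (0 + L)) := by rw [h]; trivial
    obtain ⟨x, hx1, hx2⟩ := this
    exact ⟨x, hx1, hx2⟩
  rw [AddCircle.liftIoc_coe_apply hx, Function.Periodic.lift_coe]

lemma parseval_periodic (f : ℝ → ℂ) (hf : Continuous f)
    (hp : Function.Periodic f L) :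
    (∑' n : ℤ, ‖fourierCoeff hp.lift n‖^2) = (1/L) * ∫ x in (0:ℝ)..L, ‖f x‖^2 := by
  have hlift : Continuous hp.lift := by rw [continuous_coinduced_dom]; exact hf
  set G : C(AddCircle L, ℂ) := ⟨hp.lift, hlift⟩ with hG
  have h1 := tsum_sq_fourierCoeff (ContinuousMap.toLp (E := ℂ) 2 AddCircle.haarAddCircle ℂ G)
  have h2 : ∀ n : ℤ, fourierCoeff (ContinuousMap.toLp (E := ℂ) 2 AddCircle.haarAddCircle ℂ G) n
      = fourierCoeff hp.lift n := fun n => fourierCoeff_toLp G n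
  simp_rw [h2] at h1
  have h3 : ∫ t : AddCircle L, ‖(ContinuousMap.toLp (E := ℂ) 2 AddCircle.haarAddCircle ℂ G) t‖^2 ∂AddCircle.haarAddCircle
      = ∫ t : AddCircle L, ‖G t‖^2 ∂AddCircle.haarAddCircle := by
    apply MeasureTheory.integral_congr_ae
    filter_upwards [ContinuousMap.coeFn_toLp (p := 2) AddCircle.haarAddCircle (𝕜 := ℂ) G] with t ht
    rw [ht]
  rw [h1, h3]
  have h4 : ∫ t : AddCircle L, ‖G t‖^2 ∂(volume : Measure (AddCircle L))
      = L * ∫ t : AddCircle L, ‖G t‖^2 ∂AddCircle.haarAddCircle := by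
    rw [AddCircle.volume_eq_smul_haarAddCircle, MeasureTheory.integral_smul_measure,
      ENNReal.toReal_ofReal hL.out.le, smul_eq_mul]
  have h5 : ∫ x in (0:ℝ)..(0+L), ‖G (x : AddCircle L)‖^2 = ∫ t : AddCircle L, ‖G t‖^2 ∂(volume : Measure (AddCircle L)) :=
    AddCircle.intervalIntegral_preimage L 0 (fun t => ‖G t‖^2)
  have h6 : ∀ x : ℝ, ‖f x‖^2 = ‖G (x : AddCircle L)‖^2 := by
    intro x; simp [hG, Function.Periodic.lift_coe]
  rw [intervalIntegral.integral_congr (fun x _ => h6 x)]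
  rw [show (0:ℝ) = (0:ℝ) + 0 by ring] at h5
  rw [zero_add, zero_add] at h5
  rw [h5, h4]
  rw [one_div, inv_mul_cancel_left₀ hL.out.ne.symm]

lemma summable_sq_fourierCoeff (f : Lp ℂ 2 (@AddCircle.haarAddCircle L hL)) :
    Summable fun n : ℤ => ‖fourierCoeff (f : AddCircle L → ℂ) n‖^2 := by
  have h := (lp.memℓp (fourierBasis.repr f)).summable (p := 2) (by norm_num)
  simp_rw [fourierBasis_repr] at h
  convert h using 2 with n
  rw [show ENNReal.toReal 2 = ((2:ℕ):ℝ) by norm_num, Real.rpow_natCast]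

lemma summable_sq_fourierCoeff' (f : ℝ → ℂ) (hf : Continuous f)
    (hp : Function.Periodic f L) :
    Summable fun n : ℤ => ‖fourierCoeff hp.lift n‖^2 := by
  have hlift : Continuous hp.lift := by rw [continuous_coinduced_dom]; exact hf
  set G : C(AddCircle L, ℂ) := ⟨hp.lift, hlift⟩ with hG
  have h := summable_sq_fourierCoeff L (ContinuousMap.toLp (E := ℂ) 2 AddCircle.haarAddCircle ℂ G)
  have h2 : ∀ n : ℤ, fourierCoeff (ContinuousMap.toLp (E := ℂ) 2 AddCircle.haarAddCircle ℂ G) n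
      = fourierCoeff hp.lift n := fun n => fourierCoeff_toLp G n
  simp_rw [h2] at h
  exact h

lemma fourierCoeff_lift_deriv (f f' : ℝ → ℂ)
    (hd : ∀ x, HasDerivAt f (f' x) x) (hc : Continuous f')
    (hp : Function.Periodic f L) (hp' : Function.Periodic f' L) (n : ℤ) (hn : n ≠ 0) :
    fourierCoeff hp'.lift n = (2 * π * Complex.I * n / L) * fourierCoeff hp.lift n := by
  rw [lift_eq_liftIoc L f hp, lift_eq_liftIoc L f' hp',
    fourierCoeff_liftIoc_eq, fourierCoeff_liftIoc_eq]
  have key := fourierCoeffOn_of_hasDerivAt (lt_add_of_pos_right (0:ℝ) hL.out) hn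
    (fun x _ => hd x) (hc.intervalIntegrable 0 (0 + L))
  have hfL : f (0 + L) = f 0 := hp 0
  rw [hfL] at key
  simp only [sub_self, mul_zero, zero_sub, zero_add, sub_zero] at key ⊢
  have h2 : (2 * (π:ℂ) * Complex.I * n) ≠ 0 := by
    simp [Real.pi_ne_zero, Complex.I_ne_zero, hn]
  have hLne : (L:ℂ) ≠ 0 := by exact_mod_cast hL.out.ne.symm
  rw [key]
  field_simp
  simp

omit hL in
lemma periodic_of_deriv (f f' : ℝ → ℝ) (hd : ∀ x, HasDerivAt f (f' x) x)
    (hp : Function.Periodic f L) : Function.Periodic f' L := by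
  intro x
  have h0 : HasDerivAt (fun y => f (y + L)) (f' (x + L) * 1) x :=
    (hd (x + L)).comp x ((hasDerivAt_id x).add_const L)
  rw [mul_one] at h0
  rw [hp.funext] at h0
  exact h0.unique (hd x)

lemma wirtinger (g g' : ℝ → ℝ)
    (hd : ∀ x, HasDerivAt g (g' x) x) (hgc : Continuous g) (hg'c : Continuous g')
    (hp : Function.Periodic g L) (hp' : Function.Periodic g' L)
    (hm : ∫ x in (0:ℝ)..L, g x = 0) :
    (2*π/L)^2 * ∫ x in (0:ℝ)..L, (g x)^2 ≤ ∫ x in (0:ℝ)..L, (g' x)^2 := by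
  set F : ℝ → ℂ := fun x => (g x : ℂ) with hF
  set F' : ℝ → ℂ := fun x => (g' x : ℂ) with hF'
  have hFc : Continuous F := Complex.continuous_ofReal.comp hgc
  have hF'c : Continuous F' := Complex.continuous_ofReal.comp hg'c
  have hFp : Function.Periodic F L := fun x => by simp [hF, hp x]
  have hF'p : Function.Periodic F' L := fun x => by simp [hF', hp' x]
  have hFd : ∀ x, HasDerivAt F (F' x) x := fun x => (hd x).ofReal_comp
  have hc0 : fourierCoeff hFp.lift 0 = 0 := by
    rw [fourierCoeff_eq_intervalIntegral hFp.lift 0 0]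
    simp only [neg_zero, fourier_zero, one_smul, zero_add]
    have : ∫ x in (0:ℝ)..L, hFp.lift (x : AddCircle L) = ∫ x in (0:ℝ)..L, F x :=
      intervalIntegral.integral_congr fun x _ => hFp.lift_coe x
    rw [this]
    have : ∫ x in (0:ℝ)..L, F x = ((∫ x in (0:ℝ)..L, g x : ℝ) : ℂ) := by
      rw [hF]; exact_mod_cast RCLike.intervalIntegral_ofReal (𝕜 := ℂ) (f := g) (a := 0) (b := L)
    rw [this, hm]
    simp
  have hterm : ∀ n : ℤ, (2*π/L)^2 * ‖fourierCoeff hFp.lift n‖^2 ≤ ‖fourierCoeff hF'p.lift n‖^2 := by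
    intro n
    rcases eq_or_ne n 0 with rfl | hn
    · rw [hc0]; simp
    · rw [fourierCoeff_lift_deriv L F F' hFd hF'c hFp hF'p n hn]
      rw [norm_mul, mul_pow]
      have hcast : (2 * (π:ℂ) * Complex.I * n / L) = ((2*π*(n:ℝ)/L : ℝ):ℂ) * Complex.I := by
        push_cast; ring
      have h1 : ‖(2 * (π:ℂ) * Complex.I * n / L)‖ = 2*π*|(n:ℝ)|/L := by
        rw [hcast, norm_mul, Complex.norm_I, mul_one, Complex.norm_real, Real.norm_eq_abs,
          abs_div, abs_of_pos hL.out, abs_mul, abs_of_pos (by positivity : (0:ℝ) < 2*π)]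
      rw [h1]
      have hn1 : (1:ℝ) ≤ |(n:ℝ)| := by
        rw [← Int.cast_abs]; exact_mod_cast Int.one_le_abs hn
      have hbase : 2*π/L ≤ 2*π*|(n:ℝ)|/L := by
        have h2pi : 2*π ≤ 2*π*|(n:ℝ)| := by nlinarith [Real.pi_pos]
        exact (div_le_div_iff_of_pos_right hL.out).mpr h2pi
      have h2 : (2*π/L)^2 ≤ (2*π*|(n:ℝ)|/L)^2 :=
        pow_le_pow_left₀ (div_nonneg (by positivity) hL.out.le) hbase 2
      nlinarith [sq_nonneg ‖fourierCoeff hFp.lift n‖]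
  have hs1 : Summable fun n : ℤ => ‖fourierCoeff hFp.lift n‖^2 :=
    summable_sq_fourierCoeff' L F hFc hFp
  have hs2 : Summable fun n : ℤ => ‖fourierCoeff hF'p.lift n‖^2 :=
    summable_sq_fourierCoeff' L F' hF'c hF'p
  have hsum := Summable.tsum_le_tsum hterm (hs1.mul_left _) hs2
  rw [tsum_mul_left, parseval_periodic L F hFc hFp, parseval_periodic L F' hF'c hF'p] at hsum
  have hnorm1 : ∫ x in (0:ℝ)..L, ‖F x‖^2 = ∫ x in (0:ℝ)..L, (g x)^2 :=
    intervalIntegral.integral_congr fun x _ => by simp [hF, Complex.norm_real, _root_.sq_abs]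
  have hnorm2 : ∫ x in (0:ℝ)..L, ‖F' x‖^2 = ∫ x in (0:ℝ)..L, (g' x)^2 :=
    intervalIntegral.integral_congr fun x _ => by simp [hF', Complex.norm_real, _root_.sq_abs]
  rw [hnorm1, hnorm2] at hsum
  have hLpos := hL.out
  calc (2*π/L)^2 * ∫ x in (0:ℝ)..L, (g x)^2
      = L * ((2*π/L)^2 * (1/L * ∫ x in (0:ℝ)..L, (g x)^2)) := by field_simp
    _ ≤ L * (1/L * ∫ x in (0:ℝ)..L, (g' x)^2) := by
        apply mul_le_mul_of_nonneg_left hsum hLpos.le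
    _ = ∫ x in (0:ℝ)..L, (g' x)^2 := by field_simp

omit hL in
lemma periodic_ibp (f f' g g' : ℝ → ℝ)
    (hf : ∀ x, HasDerivAt f (f' x) x) (hg : ∀ x, HasDerivAt g (g' x) x)
    (hf'c : Continuous f') (hg'c : Continuous g')
    (hfL : f L = f 0) (hgL : g L = g 0) :
    ∫ x in (0:ℝ)..L, f' x * g x = - ∫ x in (0:ℝ)..L, f x * g' x := by
  have h := intervalIntegral.integral_mul_deriv_eq_deriv_mul
    (u := f) (u' := f') (v := g) (v' := g')
    (fun x _ => hf x) (fun x _ => hg x)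
    (hf'c.intervalIntegrable 0 L) (hg'c.intervalIntegrable 0 L)
  rw [hfL, hgL] at h
  linarith

omit hL in
lemma periodic_ibp2 (f g : ℝ → ℝ)
    (hf : ContDiff ℝ 2 f) (hg : ContDiff ℝ 2 g)
    (hfp : Function.Periodic f L) (hgp : Function.Periodic g L) :
    ∫ x in (0:ℝ)..L, deriv (deriv f) x * g x = ∫ x in (0:ℝ)..L, f x * deriv (deriv g) x := by
  have hfd1 : ContDiff ℝ 1 (deriv f) := ContDiff.iterate_deriv' 1 1 (by exact_mod_cast hf)
  have hgd1 : ContDiff ℝ 1 (deriv g) := ContDiff.iterate_deriv' 1 1 (by exact_mod_cast hg)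
  have hf1 : ∀ x, HasDerivAt f (deriv f x) x :=
    fun x => (hf.differentiable (by norm_num) x).hasDerivAt
  have hg1 : ∀ x, HasDerivAt g (deriv g x) x :=
    fun x => (hg.differentiable (by norm_num) x).hasDerivAt
  have hf2 : ∀ x, HasDerivAt (deriv f) (deriv (deriv f) x) x :=
    fun x => (hfd1.differentiable (by norm_num) x).hasDerivAt
  have hg2 : ∀ x, HasDerivAt (deriv g) (deriv (deriv g) x) x :=
    fun x => (hgd1.differentiable (by norm_num) x).hasDerivAt
  have hf1c : Continuous (deriv f) := hfd1.continuous
  have hg1c : Continuous (deriv g) := hgd1.continuous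
  have hf2c : Continuous (deriv (deriv f)) := hfd1.continuous_deriv le_rfl
  have hg2c : Continuous (deriv (deriv g)) := hgd1.continuous_deriv le_rfl
  have hf1p : Function.Periodic (deriv f) L := periodic_of_deriv L f (deriv f) hf1 hfp
  have hg1p : Function.Periodic (deriv g) L := periodic_of_deriv L g (deriv g) hg1 hgp
  have e1 : deriv f L = deriv f 0 := by simpa using hf1p 0
  have e2 : g L = g 0 := by simpa using hgp 0
  have e3 : f L = f 0 := by simpa using hfp 0
  have e4 : deriv g L = deriv g 0 := by simpa using hg1p 0
  have step1 := periodic_ibp L (deriv f) (deriv (deriv f)) g (deriv g) hf2 hg1 hf2c hg1c e1 e2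
  have step2 := periodic_ibp L f (deriv f) (deriv g) (deriv (deriv g)) hf1 hg2 hf1c hg2c e3 e4
  rw [step1]
  rw [show ∀ h : ℝ → ℝ, (∫ x in (0:ℝ)..L, deriv f x * h x) = ∫ x in (0:ℝ)..L, deriv f x * h x from fun _ => rfl]
  linarith

omit hL in
lemma sinh_mono_ineq (a b : ℝ) : (a-b)^2 ≤ (Real.sinh a - Real.sinh b) * (a-b) := by
  have hmono : Monotone (fun t : ℝ => Real.sinh t - t) := by
    apply monotone_of_deriv_nonneg
    · exact Real.differentiable_sinh.sub differentiable_id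
    · intro x
      have hder : HasDerivAt (fun t : ℝ => Real.sinh t - t) (Real.cosh x - 1) x :=
        (Real.hasDerivAt_sinh x).sub (hasDerivAt_id x)
      rw [hder.deriv]
      simpa using Real.one_le_cosh x
  rcases le_total b a with h | h
  · have h2 := hmono h
    simp only [] at h2
    nlinarith
  · have h2 := hmono h
    simp only [] at h2
    nlinarith

end helpers

/-- strong monotonicity of h ↦ (sinh(h''))'' on C⁴ L-periodic
mean-zero profiles, with constant λ = (2π/L)⁴. -/
theorem operator_strongly_monotone
    (L : ℝ) (hL : 0 < L)
    (u v : ℝ → ℝ)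
    (hu : ContDiff ℝ 4 u) (hup : Function.Periodic u L)
    (hum : ∫ x in (0:ℝ)..L, u x = 0)
    (hv : ContDiff ℝ 4 v) (hvp : Function.Periodic v L)
    (hvm : ∫ x in (0:ℝ)..L, v x = 0) :
    (2 * Real.pi / L) ^ 4 * (∫ x in (0:ℝ)..L, (u x - v x) ^ 2)
      ≤ ∫ x in (0:ℝ)..L,
          (deriv (deriv (fun y => Real.sinh (deriv (deriv u) y))) x
            - deriv (deriv (fun y => Real.sinh (deriv (deriv v) y))) x)
          * (u x - v x) := by
  haveI : Fact (0 < L) := ⟨hL⟩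
  set W : ℝ → ℝ := fun x => u x - v x with hWdef
  have hW : ContDiff ℝ 4 W := hu.sub hv
  have hWp : Function.Periodic W L := fun x => by simp [hWdef, hup x, hvp x]
  -- regularity of derivatives
  have hu1 : ContDiff ℝ 3 (deriv u) := ContDiff.iterate_deriv' 3 1 (by exact_mod_cast hu)
  have hv1 : ContDiff ℝ 3 (deriv v) := ContDiff.iterate_deriv' 3 1 (by exact_mod_cast hv)
  have hW1 : ContDiff ℝ 3 (deriv W) := ContDiff.iterate_deriv' 3 1 (by exact_mod_cast hW)
  have hu2 : ContDiff ℝ 2 (deriv (deriv u)) := ContDiff.iterate_deriv' 2 1 (by exact_mod_cast hu1)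
  have hv2 : ContDiff ℝ 2 (deriv (deriv v)) := ContDiff.iterate_deriv' 2 1 (by exact_mod_cast hv1)
  have hW2 : ContDiff ℝ 2 (deriv (deriv W)) := ContDiff.iterate_deriv' 2 1 (by exact_mod_cast hW1)
  -- periodicity of derivatives
  have hu1p : Function.Periodic (deriv u) L :=
    periodic_of_deriv L u (deriv u) (fun x => (hu.differentiable (by norm_num) x).hasDerivAt) hup
  have hv1p : Function.Periodic (deriv v) L :=
    periodic_of_deriv L v (deriv v) (fun x => (hv.differentiable (by norm_num) x).hasDerivAt) hvp
  have hW1p : Function.Periodic (deriv W) L :=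
    periodic_of_deriv L W (deriv W) (fun x => (hW.differentiable (by norm_num) x).hasDerivAt) hWp
  have hu2p : Function.Periodic (deriv (deriv u)) L :=
    periodic_of_deriv L (deriv u) (deriv (deriv u))
      (fun x => (hu1.differentiable (by norm_num) x).hasDerivAt) hu1p
  have hv2p : Function.Periodic (deriv (deriv v)) L :=
    periodic_of_deriv L (deriv v) (deriv (deriv v))
      (fun x => (hv1.differentiable (by norm_num) x).hasDerivAt) hv1p
  have hW2p : Function.Periodic (deriv (deriv W)) L :=
    periodic_of_deriv L (deriv W) (deriv (deriv W))
      (fun x => (hW1.differentiable (by norm_num) x).hasDerivAt) hW1p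
  -- the sinh-composed functions
  set Su : ℝ → ℝ := fun y => Real.sinh (deriv (deriv u) y) with hSudef
  set Sv : ℝ → ℝ := fun y => Real.sinh (deriv (deriv v) y) with hSvdef
  have hSu : ContDiff ℝ 2 Su := Real.contDiff_sinh.comp hu2
  have hSv : ContDiff ℝ 2 Sv := Real.contDiff_sinh.comp hv2
  have hSup : Function.Periodic Su L := fun x => by simp [hSudef, hu2p x]
  have hSvp : Function.Periodic Sv L := fun x => by simp [hSvdef, hv2p x]
  have hSu2c : Continuous (deriv (deriv Su)) :=
    (ContDiff.iterate_deriv' 1 1 (by exact_mod_cast hSu)).continuous_deriv le_rfl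
  have hSv2c : Continuous (deriv (deriv Sv)) :=
    (ContDiff.iterate_deriv' 1 1 (by exact_mod_cast hSv)).continuous_deriv le_rfl
  have hWc : Continuous W := hW.continuous
  have hW1c : Continuous (deriv W) := hW1.continuous
  have hW2c : Continuous (deriv (deriv W)) := hW2.continuous
  -- Step A : split the RHS integral and integrate by parts twice
  have intA : (∫ x in (0:ℝ)..L, (deriv (deriv Su) x - deriv (deriv Sv) x) * W x)
      = (∫ x in (0:ℝ)..L, deriv (deriv Su) x * W x)
        - ∫ x in (0:ℝ)..L, deriv (deriv Sv) x * W x := by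
    simp_rw [sub_mul]
    exact intervalIntegral.integral_sub ((hSu2c.mul hWc).intervalIntegrable 0 L)
      ((hSv2c.mul hWc).intervalIntegrable 0 L)
  have ibpu : ∫ x in (0:ℝ)..L, deriv (deriv Su) x * W x
      = ∫ x in (0:ℝ)..L, Su x * deriv (deriv W) x :=
    periodic_ibp2 L Su W hSu (hW.of_le (by norm_num)) hSup hWp
  have ibpv : ∫ x in (0:ℝ)..L, deriv (deriv Sv) x * W x
      = ∫ x in (0:ℝ)..L, Sv x * deriv (deriv W) x :=
    periodic_ibp2 L Sv W hSv (hW.of_le (by norm_num)) hSvp hWp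
  have intB : (∫ x in (0:ℝ)..L, Su x * deriv (deriv W) x)
      - (∫ x in (0:ℝ)..L, Sv x * deriv (deriv W) x)
      = ∫ x in (0:ℝ)..L, (Su x - Sv x) * deriv (deriv W) x := by
    rw [← intervalIntegral.integral_sub (f := fun x => Su x * deriv (deriv W) x)
      (g := fun x => Sv x * deriv (deriv W) x) ((hSu.continuous.mul hW2c).intervalIntegrable 0 L)
      ((hSv.continuous.mul hW2c).intervalIntegrable 0 L)]
    congr 1; funext x; ring
  -- pointwise monotonicity of sinh
  have hW2eq : ∀ x, deriv (deriv W) x = deriv (deriv u) x - deriv (deriv v) x := by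
    intro x
    have h1 : deriv W = fun y => deriv u y - deriv v y := by
      funext y
      exact deriv_sub (hu.differentiable (by norm_num) y) (hv.differentiable (by norm_num) y)
    rw [h1]
    exact deriv_sub (hu1.differentiable (by norm_num) x) (hv1.differentiable (by norm_num) x)
  have hpoint : ∀ x ∈ Icc (0:ℝ) L, (deriv (deriv W) x)^2 ≤ (Su x - Sv x) * deriv (deriv W) x := by
    intro x _
    rw [hW2eq x]
    exact sinh_mono_ineq _ _
  have intC : (∫ x in (0:ℝ)..L, (deriv (deriv W) x)^2)
      ≤ ∫ x in (0:ℝ)..L, (Su x - Sv x) * deriv (deriv W) x := by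
    apply intervalIntegral.integral_mono_on hL.le
      ((hW2c.pow 2).intervalIntegrable 0 L)
      (((hSu.continuous.sub hSv.continuous).mul hW2c).intervalIntegrable 0 L)
    exact hpoint
  -- mean zero facts
  have hWm : ∫ x in (0:ℝ)..L, W x = 0 := by
    have : (∫ x in (0:ℝ)..L, W x)
        = (∫ x in (0:ℝ)..L, u x) - ∫ x in (0:ℝ)..L, v x :=
      intervalIntegral.integral_sub (hu.continuous.intervalIntegrable 0 L)
        (hv.continuous.intervalIntegrable 0 L)
    rw [this, hum, hvm]; ring
  have hW1m : ∫ x in (0:ℝ)..L, deriv W x = 0 := by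
    rw [intervalIntegral.integral_deriv_eq_sub
      (fun x _ => (hW.differentiable (by norm_num) x)) (hW1c.intervalIntegrable 0 L)]
    have := hWp 0
    simp only [zero_add] at this
    rw [this, sub_self]
  -- Wirtinger twice
  have wirt1 : (2*π/L)^2 * ∫ x in (0:ℝ)..L, (W x)^2 ≤ ∫ x in (0:ℝ)..L, (deriv W x)^2 :=
    wirtinger L W (deriv W) (fun x => (hW.differentiable (by norm_num) x).hasDerivAt)
      hWc hW1c hWp hW1p hWm
  have wirt2 : (2*π/L)^2 * ∫ x in (0:ℝ)..L, (deriv W x)^2 ≤ ∫ x in (0:ℝ)..L, (deriv (deriv W) x)^2 :=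
    wirtinger L (deriv W) (deriv (deriv W))
      (fun x => (hW1.differentiable (by norm_num) x).hasDerivAt)
      hW1c hW2c hW1p hW2p hW1m
  -- assemble
  have hgoalW : (∫ x in (0:ℝ)..L, (u x - v x)^2) = ∫ x in (0:ℝ)..L, (W x)^2 := rfl
  have hc : (0:ℝ) ≤ (2*π/L)^2 := sq_nonneg _
  have key : (2*π/L)^4 * ∫ x in (0:ℝ)..L, (W x)^2
      ≤ ∫ x in (0:ℝ)..L, (Su x - Sv x) * deriv (deriv W) x := by
    have step : (2*π/L)^2 * ((2*π/L)^2 * ∫ x in (0:ℝ)..L, (W x)^2)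
        ≤ (2*π/L)^2 * ∫ x in (0:ℝ)..L, (deriv W x)^2 :=
      mul_le_mul_of_nonneg_left wirt1 hc
    calc (2*π/L)^4 * ∫ x in (0:ℝ)..L, (W x)^2
        = (2*π/L)^2 * ((2*π/L)^2 * ∫ x in (0:ℝ)..L, (W x)^2) := by ring
      _ ≤ (2*π/L)^2 * ∫ x in (0:ℝ)..L, (deriv W x)^2 := step
      _ ≤ ∫ x in (0:ℝ)..L, (deriv (deriv W) x)^2 := wirt2
      _ ≤ _ := intC
  rw [hgoalW]
  calc (2*π/L)^4 * ∫ x in (0:ℝ)..L, (W x)^2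
      ≤ ∫ x in (0:ℝ)..L, (Su x - Sv x) * deriv (deriv W) x := key
    _ = ∫ x in (0:ℝ)..L, (deriv (deriv Su) x - deriv (deriv Sv) x) * W x := by
        rw [intA, ibpu, ibpv, intB]
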